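/- arXiv:2312.12800 — 2 statements merged into one kernel-verified Lean document; each statement's English description precedes it below -/
import Mathlib

section
/- Let ρ be a density matrix on ℂ^d and let {K_j}_{j=1}^n be Kraus operators of a quantum channel Φ on ℂ^d. If {K′_i}_{i=1}^n is another family of Kraus operators of the same channel given by K′_i = Σ_j U_{ij} K_j for an n×n unitary matrix (U_{ij}), then Σ_i V_ρ(K′_i) = Σ_j V_ρ(K_j); that is, the channel variance V_ρ(Φ) is independent of the choice of Kraus decomposition. -/
open Matrix
open scoped ComplexOrder

noncomputable section

/-- Variance of an operator `K` with respect to a state `ρ`: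
`V_ρ(K) = ½ tr((K†K + KK†)ρ) − |tr(Kρ)|²`. -/
def opVar {d : ℕ} (ρ K : Matrix (Fin d) (Fin d) ℂ) : ℝ :=
  (((Kᴴ * K + K * Kᴴ) * ρ).trace).re / 2 - ‖(K * ρ).trace‖ ^ 2

/-- The positive semidefinite square root of a positive semidefinite matrix
(Mathlib's former `Matrix.PosSemidef.sqrt`, removed since; same definition). -/
def Matrix.PosSemidef.sqrt {n : Type*} [Fintype n] [DecidableEq n] {𝕜 : Type*} [RCLike 𝕜]
    {A : Matrix n n 𝕜} (hA : A.PosSemidef) : Matrix n n 𝕜 :=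
  hA.1.eigenvectorUnitary.1 * diagonal ((↑) ∘ (√·) ∘ hA.1.eigenvalues) *
  (star hA.1.eigenvectorUnitary : Matrix n n 𝕜)

/-- Variance of a channel with Kraus operators `K i`: `V_ρ(Φ) = Σ_i V_ρ(K_i)`. -/
def chanVar {d n : ℕ} (ρ : Matrix (Fin d) (Fin d) ℂ)
    (K : Fin n → Matrix (Fin d) (Fin d) ℂ) : ℝ :=
  ∑ i, opVar ρ (K i)

/-- Wigner–Yanase skew information of a channel with Kraus operators `K i`:
`I_ρ(Φ) = ½ Σ_i ‖[√ρ, K_i]‖_F²`, where `√ρ` is the PSD square root of `ρ`. -/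
def chanSkew {d n : ℕ} (ρ : Matrix (Fin d) (Fin d) ℂ) (hρ : ρ.PosSemidef)
    (K : Fin n → Matrix (Fin d) (Fin d) ℂ) : ℝ :=
  (1 / 2) * ∑ i,
    (((hρ.sqrt * K i - K i * hρ.sqrt)ᴴ * (hρ.sqrt * K i - K i * hρ.sqrt)).trace).re

/-- Quantum uncertainty of a channel:
`Q_ρ(Φ) = √(V_ρ(Φ)² − (V_ρ(Φ) − I_ρ(Φ))²)`. -/
def chanQ {d n : ℕ} (ρ : Matrix (Fin d) (Fin d) ℂ) (hρ : ρ.PosSemidef)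
    (K : Fin n → Matrix (Fin d) (Fin d) ℂ) : ℝ :=
  Real.sqrt ((chanVar ρ K) ^ 2 - (chanVar ρ K - chanSkew ρ hρ K) ^ 2)

lemma key_sum {n : ℕ} (U : Matrix (Fin n) (Fin n) ℂ) (hU : Uᴴ * U = 1)
    {M : Type*} [AddCommMonoid M] [Module ℂ M] (f : Fin n → Fin n → M) :
    ∑ i, ∑ j, ∑ k, ((starRingEnd ℂ) (U i j) * U i k) • f j k = ∑ j, f j j := by
  rw [Finset.sum_comm]
  have hUe : ∀ j k, (∑ i, (starRingEnd ℂ) (U i j) * U i k) = if j = k then 1 else 0 := by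
    intro j k
    have h := congrFun (congrFun hU j) k
    simpa [Matrix.mul_apply, Matrix.one_apply] using h
  calc ∑ j, ∑ i, ∑ k, ((starRingEnd ℂ) (U i j) * U i k) • f j k
      = ∑ j, ∑ k, (∑ i, (starRingEnd ℂ) (U i j) * U i k) • f j k := by
        refine Finset.sum_congr rfl fun j _ => ?_
        rw [Finset.sum_comm]
        simp [Finset.sum_smul]
    _ = ∑ j, f j j := by
        simp [hUe, ite_smul]

/-- The channel variance is independent of the choice of Kraus decomposition:
if `K′_i = Σ_j U_{ij} K_j` for a unitary matrix `U`, then `Σ_i V_ρ(K′_i) = Σ_j V_ρ(K_j)`. -/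
theorem stmt_5 {d n : ℕ}
    (ρ : Matrix (Fin d) (Fin d) ℂ) (hρ : ρ.PosSemidef) (htr : ρ.trace = 1)
    (K K' : Fin n → Matrix (Fin d) (Fin d) ℂ)
    (hK : ∑ j, (K j)ᴴ * K j = 1)
    (U : Matrix (Fin n) (Fin n) ℂ) (hU : Uᴴ * U = 1)
    (hK' : ∀ i, K' i = ∑ j, U i j • K j) :
    ∑ i, opVar ρ (K' i) = ∑ j, opVar ρ (K j) := by
  have h1 : ∑ i, (K' i)ᴴ * (K' i) = ∑ j, (K j)ᴴ * K j := by
    rw [← key_sum U hU (fun j k => (K j)ᴴ * K k)]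
    refine Finset.sum_congr rfl fun i _ => ?_
    rw [hK']
    simp only [Matrix.conjTranspose_sum, Matrix.conjTranspose_smul, Finset.sum_mul,
      Finset.mul_sum, Matrix.smul_mul, Matrix.mul_smul, smul_smul]
    rw [Finset.sum_comm]
    refine Finset.sum_congr rfl fun j _ => Finset.sum_congr rfl fun k _ => ?_
    rw [mul_comm]
    rfl
  have h2 : ∑ i, (K' i) * (K' i)ᴴ = ∑ j, K j * (K j)ᴴ := by
    rw [← key_sum U hU (fun j k => K k * (K j)ᴴ)]
    refine Finset.sum_congr rfl fun i _ => ?_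
    rw [hK']
    simp only [Matrix.conjTranspose_sum, Matrix.conjTranspose_smul, Finset.sum_mul,
      Finset.mul_sum, Matrix.smul_mul, Matrix.mul_smul, smul_smul]
    refine Finset.sum_congr rfl fun j _ => Finset.sum_congr rfl fun k _ => ?_
    rfl
  have htrc : ∀ i, (K' i * ρ).trace = ∑ j, U i j * (K j * ρ).trace := by
    intro i
    rw [hK']
    simp [Finset.sum_mul, Matrix.smul_mul, Matrix.trace_smul, smul_eq_mul]
  have h3c : ∑ i, (starRingEnd ℂ) ((K' i * ρ).trace) * ((K' i * ρ).trace)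
      = ∑ j, (starRingEnd ℂ) ((K j * ρ).trace) * ((K j * ρ).trace) := by
    rw [← key_sum U hU (fun j k =>
      (starRingEnd ℂ) ((K j * ρ).trace) * ((K k * ρ).trace))]
    refine Finset.sum_congr rfl fun i _ => ?_
    rw [htrc, map_sum, Finset.sum_mul_sum]
    refine Finset.sum_congr rfl fun j _ => Finset.sum_congr rfl fun k _ => ?_
    simp only [_root_.map_mul, smul_eq_mul]
    ring
  have habs : ∀ z : ℂ, ‖z‖ ^ 2 = ((starRingEnd ℂ) z * z).re := by
    intro z
    rw [Complex.sq_norm, Complex.normSq_apply, Complex.mul_re]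
    simp
  have h3 : ∑ i, ‖(K' i * ρ).trace‖ ^ 2
      = ∑ j, ‖(K j * ρ).trace‖ ^ 2 := by
    simp only [habs, ← Complex.re_sum, h3c]
  have h12 : ∑ i, ((K' i)ᴴ * K' i + K' i * (K' i)ᴴ)
      = ∑ j, ((K j)ᴴ * K j + K j * (K j)ᴴ) := by
    rw [Finset.sum_add_distrib, Finset.sum_add_distrib, h1, h2]
  unfold opVar
  rw [Finset.sum_sub_distrib, Finset.sum_sub_distrib, h3, ← Finset.sum_div, ← Finset.sum_div,
    ← Complex.re_sum, ← Complex.re_sum, ← Matrix.trace_sum, ← Matrix.trace_sum,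
    ← Finset.sum_mul, ← Finset.sum_mul, h12]
end
end

section
/- Let ρ = ½(I + r_x σ_x + r_y σ_y + r_z σ_z) be a qubit density matrix with Bloch vector (r_x, r_y, r_z), r_x² + r_y² + r_z² ≤ 1, and regard each Pauli matrix σ_x, σ_y, σ_z as a unitary channel with the single Kraus operator σ_x, σ_y, σ_z respectively. If |r_x| = |r_y| = |r_z| = 1/√3, or (|r_x| − 1)(|r_y| − 1)(|r_z| − 1) = 0, then Q_ρ(σ_x)·Q_ρ(σ_y)·Q_ρ(σ_z) = (τ/8) · |tr(σ_x ρ) · tr(σ_y ρ) · tr(σ_z ρ)| with τ = 64/(3√3). -/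
open Matrix
open scoped ComplexOrder

noncomputable section

/-- Pauli matrix σ_x. -/
def pauliX : Matrix (Fin 2) (Fin 2) ℂ := !![0, 1; 1, 0]

/-- Pauli matrix σ_y. -/
def pauliY : Matrix (Fin 2) (Fin 2) ℂ := !![0, -Complex.I; Complex.I, 0]

/-- Pauli matrix σ_z. -/
def pauliZ : Matrix (Fin 2) (Fin 2) ℂ := !![1, 0; 0, -1]

section key
variable (rx ry rz : ℝ) (ρ : Matrix (Fin 2) (Fin 2) ℂ)
  (hρ' : ρ = !![((1:ℂ)+rz)/2, ((rx:ℂ) - ry*Complex.I)/2;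
                ((rx:ℂ) + ry*Complex.I)/2, ((1:ℂ)-rz)/2])
  (hρ : ρ.PosSemidef) (hsqrt : hρ.sqrt = ρ)
  (hpure : rx ^ 2 + ry ^ 2 + rz ^ 2 = 1)

include hρ' hsqrt hpure

lemma keyX (hx2 : rx^2 ≤ 1) :
    chanQ ρ hρ ![pauliX] = 1 - rx ^ 2 ∧ (pauliX * ρ).trace = (rx : ℂ) := by
  have hXH : pauliXᴴ = pauliX := by
    ext i j; fin_cases i <;> fin_cases j <;> simp [pauliX]
  have hXX : pauliX * pauliX = 1 := by
    ext i j; fin_cases i <;> fin_cases j <;>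
      simp [pauliX, Matrix.mul_apply, Fin.sum_univ_two, Matrix.one_apply]
  have htrρ : ρ.trace = 1 := by
    rw [hρ']; simp [Matrix.trace, Fin.sum_univ_two]; ring
  have ht : (pauliX * ρ).trace = (rx : ℂ) := by
    rw [hρ']; simp [pauliX, Matrix.trace, Matrix.mul_apply, Fin.sum_univ_two]; ring
  have hV : chanVar ρ ![pauliX] = 1 - rx ^ 2 := by
    have h2 : ((pauliXᴴ * pauliX + pauliX * pauliXᴴ) * ρ).trace = 2 := by
      rw [hXH, hXX]
      rw [show ((1 : Matrix (Fin 2) (Fin 2) ℂ) + 1) * ρ = ρ + ρ by noncomm_ring]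
      rw [Matrix.trace_add, htrρ]; norm_num
    simp [chanVar, opVar, Fin.sum_univ_one, h2, ht, Complex.norm_real, Real.norm_eq_abs, sq_abs]
    try norm_num
  have hC : ρ * pauliX - pauliX * ρ
      = !![-(ry:ℂ)*Complex.I, (rz:ℂ); -(rz:ℂ), (ry:ℂ)*Complex.I] := by
    rw [hρ']
    ext i j
    fin_cases i <;> fin_cases j <;>
      (simp [pauliX, Matrix.mul_apply, Fin.sum_univ_two]; try ring)
  have hS : chanSkew ρ hρ ![pauliX] = ry ^ 2 + rz ^ 2 := by
    rw [chanSkew, Fin.sum_univ_one]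
    simp only [Matrix.cons_val_zero]
    rw [hsqrt, hC]
    have h3 : (!![-(ry:ℂ)*Complex.I, (rz:ℂ); -(rz:ℂ), (ry:ℂ)*Complex.I]ᴴ *
        !![-(ry:ℂ)*Complex.I, (rz:ℂ); -(rz:ℂ), (ry:ℂ)*Complex.I]).trace
        = ((2*(ry^2+rz^2) : ℝ) : ℂ) := by
      simp [Matrix.trace, Matrix.mul_apply, Fin.sum_univ_two, Matrix.conjTranspose_apply,
        Complex.star_def, _root_.map_mul, Complex.conj_ofReal, Complex.conj_I]
      push_cast
      ring_nf
      simp [Complex.I_sq]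
      try ring
    rw [h3, Complex.ofReal_re]
    ring
  refine ⟨?_, ht⟩
  rw [chanQ, hV, hS]
  have h1 : ry ^ 2 + rz ^ 2 = 1 - rx ^ 2 := by linarith
  rw [h1]
  simp
  rw [Real.sqrt_sq (by linarith)]

lemma keyY (hy2 : ry^2 ≤ 1) :
    chanQ ρ hρ ![pauliY] = 1 - ry ^ 2 ∧ (pauliY * ρ).trace = (ry : ℂ) := by
  have hXH : pauliYᴴ = pauliY := by
    ext i j; fin_cases i <;> fin_cases j <;> simp [pauliY]
  have hXX : pauliY * pauliY = 1 := by
    ext i j; fin_cases i <;> fin_cases j <;>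
      simp [pauliY, Matrix.mul_apply, Fin.sum_univ_two, Matrix.one_apply]
  have htrρ : ρ.trace = 1 := by
    rw [hρ']; simp [Matrix.trace, Fin.sum_univ_two]; ring
  have ht : (pauliY * ρ).trace = (ry : ℂ) := by
    rw [hρ']; simp [pauliY, Matrix.trace, Matrix.mul_apply, Fin.sum_univ_two]
    ring_nf
    simp [Complex.I_sq]
    try ring
  have hV : chanVar ρ ![pauliY] = 1 - ry ^ 2 := by
    have h2 : ((pauliYᴴ * pauliY + pauliY * pauliYᴴ) * ρ).trace = 2 := by
      rw [hXH, hXX]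
      rw [show ((1 : Matrix (Fin 2) (Fin 2) ℂ) + 1) * ρ = ρ + ρ by noncomm_ring]
      rw [Matrix.trace_add, htrρ]; norm_num
    simp [chanVar, opVar, Fin.sum_univ_one, h2, ht, Complex.norm_real, Real.norm_eq_abs, sq_abs]
    try norm_num
  have hC : ρ * pauliY - pauliY * ρ
      = !![(rx:ℂ)*Complex.I, -(rz:ℂ)*Complex.I; -(rz:ℂ)*Complex.I, -(rx:ℂ)*Complex.I] := by
    rw [hρ']
    ext i j
    fin_cases i <;> fin_cases j <;>
      (simp [pauliY, Matrix.mul_apply, Fin.sum_univ_two]; try ring)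
  have hS : chanSkew ρ hρ ![pauliY] = rx ^ 2 + rz ^ 2 := by
    rw [chanSkew, Fin.sum_univ_one]
    simp only [Matrix.cons_val_zero]
    rw [hsqrt, hC]
    have h3 : (!![(rx:ℂ)*Complex.I, -(rz:ℂ)*Complex.I; -(rz:ℂ)*Complex.I, -(rx:ℂ)*Complex.I]ᴴ *
        !![(rx:ℂ)*Complex.I, -(rz:ℂ)*Complex.I; -(rz:ℂ)*Complex.I, -(rx:ℂ)*Complex.I]).trace
        = ((2*(rx^2+rz^2) : ℝ) : ℂ) := by
      simp [Matrix.trace, Matrix.mul_apply, Fin.sum_univ_two, Matrix.conjTranspose_apply,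
        Complex.star_def, _root_.map_mul, Complex.conj_ofReal, Complex.conj_I]
      push_cast
      ring_nf
      simp [Complex.I_sq]
      try ring
    rw [h3, Complex.ofReal_re]
    ring
  refine ⟨?_, ht⟩
  rw [chanQ, hV, hS]
  have h1 : rx ^ 2 + rz ^ 2 = 1 - ry ^ 2 := by linarith
  rw [h1]
  simp
  rw [Real.sqrt_sq (by linarith)]

lemma keyZ (hz2 : rz^2 ≤ 1) :
    chanQ ρ hρ ![pauliZ] = 1 - rz ^ 2 ∧ (pauliZ * ρ).trace = (rz : ℂ) := by
  have hXH : pauliZᴴ = pauliZ := by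
    ext i j; fin_cases i <;> fin_cases j <;> simp [pauliZ]
  have hXX : pauliZ * pauliZ = 1 := by
    ext i j; fin_cases i <;> fin_cases j <;>
      simp [pauliZ, Matrix.mul_apply, Fin.sum_univ_two, Matrix.one_apply]
  have htrρ : ρ.trace = 1 := by
    rw [hρ']; simp [Matrix.trace, Fin.sum_univ_two]; ring
  have ht : (pauliZ * ρ).trace = (rz : ℂ) := by
    rw [hρ']; simp [pauliZ, Matrix.trace, Matrix.mul_apply, Fin.sum_univ_two]; ring
  have hV : chanVar ρ ![pauliZ] = 1 - rz ^ 2 := by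
    have h2 : ((pauliZᴴ * pauliZ + pauliZ * pauliZᴴ) * ρ).trace = 2 := by
      rw [hXH, hXX]
      rw [show ((1 : Matrix (Fin 2) (Fin 2) ℂ) + 1) * ρ = ρ + ρ by noncomm_ring]
      rw [Matrix.trace_add, htrρ]; norm_num
    simp [chanVar, opVar, Fin.sum_univ_one, h2, ht, Complex.norm_real, Real.norm_eq_abs, sq_abs]
    try norm_num
  have hC : ρ * pauliZ - pauliZ * ρ
      = !![0, -((rx:ℂ) - ry*Complex.I); (rx:ℂ) + ry*Complex.I, 0] := by
    rw [hρ']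
    ext i j
    fin_cases i <;> fin_cases j <;>
      (simp [pauliZ, Matrix.mul_apply, Fin.sum_univ_two]; try ring)
  have hS : chanSkew ρ hρ ![pauliZ] = rx ^ 2 + ry ^ 2 := by
    rw [chanSkew, Fin.sum_univ_one]
    simp only [Matrix.cons_val_zero]
    rw [hsqrt, hC]
    have h3 : (!![0, -((rx:ℂ) - ry*Complex.I); (rx:ℂ) + ry*Complex.I, 0]ᴴ *
        !![0, -((rx:ℂ) - ry*Complex.I); (rx:ℂ) + ry*Complex.I, 0]).trace
        = ((2*(rx^2+ry^2) : ℝ) : ℂ) := by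
      simp [Matrix.trace, Matrix.mul_apply, Fin.sum_univ_two, Matrix.conjTranspose_apply,
        Complex.star_def, _root_.map_mul, Complex.conj_ofReal, Complex.conj_I]
      push_cast
      ring_nf
      simp [Complex.I_sq]
      try ring
    rw [h3, Complex.ofReal_re]
    ring
  refine ⟨?_, ht⟩
  rw [chanQ, hV, hS]
  have h1 : rx ^ 2 + ry ^ 2 = 1 - rz ^ 2 := by linarith
  rw [h1]
  simp
  rw [Real.sqrt_sq (by linarith)]

end key

lemma numer_case : (1 - 1/3 : ℝ) * (1 - 1/3) * (1 - 1/3) =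
    64 / (3 * Real.sqrt 3) / 8 *
      (1 / Real.sqrt 3 * (1 / Real.sqrt 3) * (1 / Real.sqrt 3)) := by
  have h3 : (Real.sqrt 3) * (Real.sqrt 3) = 3 := Real.mul_self_sqrt (by norm_num)
  have h3pos : (0:ℝ) < Real.sqrt 3 := Real.sqrt_pos.mpr (by norm_num)
  field_simp
  nlinarith [h3]

/-- Equality condition for the tight triple-product Pauli uncertainty relation. -/
theorem stmt_14 (rx ry rz : ℝ) (hr : rx ^ 2 + ry ^ 2 + rz ^ 2 ≤ 1)
    (ρ : Matrix (Fin 2) (Fin 2) ℂ)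
    (hρdef : ρ = (1 / 2 : ℂ) •
      (1 + (rx : ℂ) • pauliX + (ry : ℂ) • pauliY + (rz : ℂ) • pauliZ))
    (hρ : ρ.PosSemidef)
    (hcond : (|rx| = 1 / Real.sqrt 3 ∧ |ry| = 1 / Real.sqrt 3 ∧ |rz| = 1 / Real.sqrt 3) ∨
      (|rx| - 1) * (|ry| - 1) * (|rz| - 1) = 0) :
    chanQ ρ hρ ![pauliX] * chanQ ρ hρ ![pauliY] * chanQ ρ hρ ![pauliZ] =
      (64 / (3 * Real.sqrt 3)) / 8 *
        ‖(pauliX * ρ).trace * (pauliY * ρ).trace * (pauliZ * ρ).trace‖ := by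
  have h3 : (Real.sqrt 3) * (Real.sqrt 3) = 3 := Real.mul_self_sqrt (by norm_num)
  have hx2 : rx ^ 2 ≤ 1 := by nlinarith [sq_nonneg ry, sq_nonneg rz]
  have hy2 : ry ^ 2 ≤ 1 := by nlinarith [sq_nonneg rx, sq_nonneg rz]
  have hz2 : rz ^ 2 ≤ 1 := by nlinarith [sq_nonneg rx, sq_nonneg ry]
  have h3pos : (0:ℝ) < Real.sqrt 3 := Real.sqrt_pos.mpr (by norm_num)
  -- purity
  have hpure : rx ^ 2 + ry ^ 2 + rz ^ 2 = 1 := by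
    rcases hcond with ⟨hx, hy, hz⟩ | h
    · have ex : rx^2 = 1/3 := by rw [← sq_abs, hx, div_pow, one_pow, sq, h3]
      have ey : ry^2 = 1/3 := by rw [← sq_abs, hy, div_pow, one_pow, sq, h3]
      have ez : rz^2 = 1/3 := by rw [← sq_abs, hz, div_pow, one_pow, sq, h3]
      rw [ex, ey, ez]; norm_num
    · have key : ∀ a b c : ℝ, |a| = 1 → a^2 + b^2 + c^2 ≤ 1 →
          a^2 + b^2 + c^2 = 1 := by
        intro a b c ha habc
        have ha2 : a^2 = 1 := by rw [← sq_abs, ha, one_pow]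
        nlinarith [sq_nonneg b, sq_nonneg c]
      rcases mul_eq_zero.mp h with h' | hz
      · rcases mul_eq_zero.mp h' with hx | hy
        · exact key rx ry rz (by linarith [sub_eq_zero.mp hx]) hr
        · linarith [key ry rx rz (by linarith [sub_eq_zero.mp hy]) (by linarith)]
      · linarith [key rz rx ry (by linarith [sub_eq_zero.mp hz]) (by linarith)]
  have hc : (rx:ℂ)^2 + (ry:ℂ)^2 + (rz:ℂ)^2 = 1 := by
    exact_mod_cast congrArg (Complex.ofReal) hpure
  -- explicit matrix form
  have hρ' : ρ = !![((1:ℂ)+rz)/2, ((rx:ℂ) - ry*Complex.I)/2;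
                    ((rx:ℂ) + ry*Complex.I)/2, ((1:ℂ)-rz)/2] := by
    rw [hρdef]
    ext i j
    fin_cases i <;> fin_cases j <;>
      (simp [pauliX, pauliY, pauliZ, Matrix.one_apply]; try ring)
  -- ρ is a projection, hence its own square root
  have hsq : ρ ^ 2 = ρ := by
    rw [hρdef]
    ext i j
    fin_cases i <;> fin_cases j <;>
      simp [pauliX, pauliY, pauliZ, pow_two, Matrix.mul_apply, Fin.sum_univ_succ,
        Matrix.one_apply] <;>
    first
      | linear_combination (norm := (ring_nf; all_goals ((try simp only [Complex.I_sq]); ring1))) (1/4 : ℂ) * hc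
      | linear_combination (norm := (ring_nf; all_goals ((try simp only [Complex.I_sq]); ring1))) (-1/4 : ℂ) * hc
      | linear_combination (norm := (ring_nf; all_goals ((try simp only [Complex.I_sq]); ring1))) (1/2 : ℂ) * hc
      | linear_combination (norm := (ring_nf; all_goals ((try simp only [Complex.I_sq]); ring1))) (-1/2 : ℂ) * hc
      | linear_combination (norm := (ring_nf; all_goals ((try simp only [Complex.I_sq]); ring1))) (0 : ℂ) * hc
  have hsqrt : hρ.sqrt = ρ := by
    have hev : ∀ i, Real.sqrt (hρ.1.eigenvalues i) = hρ.1.eigenvalues i := by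
      intro i
      have hv := hρ.1.mulVec_eigenvectorBasis i
      have h2 : (ρ ^ 2) *ᵥ ⇑(hρ.1.eigenvectorBasis i)
          = ((hρ.1.eigenvalues i) ^ 2 : ℝ) • ⇑(hρ.1.eigenvectorBasis i) := by
        rw [pow_two, ← Matrix.mulVec_mulVec, hv, Matrix.mulVec_smul, hv, smul_smul, pow_two]
      rw [hsq, hv] at h2
      have hne0 := hρ.1.eigenvectorBasis.orthonormal.ne_zero i
      have hne : (⇑(hρ.1.eigenvectorBasis i) : Fin 2 → ℂ) ≠ 0 := by
        intro h
        apply hne0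
        ext j
        simpa using congrFun h j
      have hl : hρ.1.eigenvalues i = hρ.1.eigenvalues i * hρ.1.eigenvalues i := by
        have := smul_left_injective ℝ hne h2
        simpa [pow_two] using this
      have hnn := hρ.eigenvalues_nonneg i
      calc Real.sqrt (hρ.1.eigenvalues i)
          = Real.sqrt (hρ.1.eigenvalues i * hρ.1.eigenvalues i) := by rw [← hl]
        _ = hρ.1.eigenvalues i := Real.sqrt_mul_self hnn
    have hd : (diagonal (RCLike.ofReal ∘ (√·) ∘ hρ.1.eigenvalues) : Matrix (Fin 2) (Fin 2) ℂ)
        = diagonal (RCLike.ofReal ∘ hρ.1.eigenvalues) := by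
      congr 1
      funext i
      simp [hev i]
    rw [Matrix.PosSemidef.sqrt, hd]
    conv_rhs => rw [hρ.1.spectral_theorem]
    simp [Unitary.conjStarAlgAut_apply]
  obtain ⟨hQx, htx⟩ := keyX rx ry rz ρ hρ' hρ hsqrt hpure hx2
  obtain ⟨hQy, hty⟩ := keyY rx ry rz ρ hρ' hρ hsqrt hpure hy2
  obtain ⟨hQz, htz⟩ := keyZ rx ry rz ρ hρ' hρ hsqrt hpure hz2
  rw [hQx, hQy, hQz, htx, hty, htz]
  have habs : ‖((rx:ℂ)) * ((ry:ℂ)) * ((rz:ℂ))‖ = |rx| * |ry| * |rz| := by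
    rw [← Complex.ofReal_mul, ← Complex.ofReal_mul, Complex.norm_real, Real.norm_eq_abs, abs_mul, abs_mul]
  rw [habs]
  clear habs htx hty htz hQx hQy hQz hsqrt hsq hρ' hc hρ hρdef
  clear ρ
  rcases hcond with ⟨hx, hy, hz⟩ | h
  · have ex : rx^2 = 1/3 := by rw [← sq_abs, hx, div_pow, one_pow, sq, h3]
    have ey : ry^2 = 1/3 := by rw [← sq_abs, hy, div_pow, one_pow, sq, h3]
    have ez : rz^2 = 1/3 := by rw [← sq_abs, hz, div_pow, one_pow, sq, h3]
    rw [ex, ey, ez, hx, hy, hz]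
    exact numer_case
  · have key : ∀ a b c : ℝ, |a| = 1 → a^2 + b^2 + c^2 ≤ 1 → b = 0 ∧ c = 0 ∧ a^2 = 1 := by
      intro a b c ha habc
      have ha2 : a^2 = 1 := by rw [← sq_abs, ha, one_pow]
      refine ⟨?_, ?_, ha2⟩ <;> nlinarith [sq_nonneg b, sq_nonneg c]
    rcases mul_eq_zero.mp h with h' | hz
    · rcases mul_eq_zero.mp h' with hx | hy
      · obtain ⟨hy0, hz0, hxx2⟩ := key rx ry rz (by linarith [sub_eq_zero.mp hx]) hr
        rw [hxx2, hy0, hz0]; simp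
      · obtain ⟨hx0, hz0, hyy2⟩ := key ry rx rz (by linarith [sub_eq_zero.mp hy]) (by linarith)
        rw [hyy2, hx0, hz0]; simp
    · obtain ⟨hx0, hy0, hzz2⟩ := key rz rx ry (by linarith [sub_eq_zero.mp hz]) (by linarith)
      rw [hzz2, hx0, hy0]; simp
end
end
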